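/- Let G be a finite undirected weighted graph with nonnegative weights and s, u, v distinct vertices. If S is a minimum s-{u,v} cut (i.e., a minimum cut separating s from both u and v) and C is the unique minimum s-v cut with C minimal by inclusion, then C ⊆ S. -/
import Mathlib


open Finset

variable {V : Type*} [Fintype V] [DecidableEq V]

noncomputable section

/-- Cost of the cut `U`: total weight of edges crossing between `U` and its complement. -/
def cutCost (w : V → V → ℝ) (U : Finset V) : ℝ :=
  ∑ u ∈ U, ∑ v ∈ Uᶜ, w u v

/-- `U` is an `S`-`T` cut: `T ⊆ U ⊆ V − S`. -/
def IsCut (S T U : Finset V) : Prop := T ⊆ U ∧ Disjoint U S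

/-- Minimum cost of an `S`-`T` cut. -/
def minCutCost (w : V → V → ℝ) (S T : Finset V) : ℝ :=
  sInf (cutCost w '' {U : Finset V | IsCut S T U})

/-- `U` is a minimum `S`-`T` cut. -/
def IsMinCut (w : V → V → ℝ) (S T U : Finset V) : Prop :=
  IsCut S T U ∧ cutCost w U = minCutCost w S T

lemma cutCost_eq (w : V → V → ℝ) (U : Finset V) :
    cutCost w U = ∑ a : V, ∑ b : V, (if a ∈ U ∧ b ∉ U then w a b else 0) := by
  unfold cutCost
  rw [← Finset.sum_subset (Finset.subset_univ U) (by intro a _ ha; simp [ha])]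
  · apply Finset.sum_congr rfl
    intro a ha
    rw [← Finset.sum_subset (Finset.subset_univ Uᶜ) (by intro b _ hb; simp_all)]
    apply Finset.sum_congr rfl
    intro b hb
    simp_all

lemma cutCost_nonneg (w : V → V → ℝ) (hw : ∀ u v, 0 ≤ w u v) (U : Finset V) :
    0 ≤ cutCost w U :=
  Finset.sum_nonneg fun _ _ => Finset.sum_nonneg fun _ _ => hw _ _

lemma cutCost_submodular (w : V → V → ℝ) (hw : ∀ u v, 0 ≤ w u v) (A B : Finset V) :
    cutCost w (A ∩ B) + cutCost w (A ∪ B) ≤ cutCost w A + cutCost w B := by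
  simp only [cutCost_eq, ← Finset.sum_add_distrib]
  refine Finset.sum_le_sum fun a _ => Finset.sum_le_sum fun b _ => ?_
  by_cases haA : a ∈ A <;> by_cases haB : a ∈ B <;> by_cases hbA : b ∈ A <;>
    by_cases hbB : b ∈ B <;>
    simp [haA, haB, hbA, hbB] <;> linarith [hw a b]

lemma minCutCost_le (w : V → V → ℝ) (hw : ∀ u v, 0 ≤ w u v) {S T U : Finset V}
    (hU : IsCut S T U) : minCutCost w S T ≤ cutCost w U := by
  apply csInf_le
  · exact ⟨0, by rintro x ⟨U', _, rfl⟩; exact cutCost_nonneg w hw U'⟩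
  · exact ⟨U, hU, rfl⟩

/-- The inclusion-minimal minimum `s`-`v` cut is contained in every minimum `s`-`{u,v}` cut. -/
theorem minimal_minCut_subset_of_pair_cut (w : V → V → ℝ) (hw : ∀ u v, 0 ≤ w u v)
    (hsym : ∀ u v, w u v = w v u)
    (s u v : V) (hsu : s ≠ u) (hsv : s ≠ v) (huv : u ≠ v)
    (S C : Finset V)
    (hS : IsMinCut w {s} {u, v} S)
    (hC : IsMinCut w {s} {v} C)
    (hCmin : ∀ U, IsMinCut w {s} {v} U → U ⊆ C → U = C) :
    C ⊆ S := by
  obtain ⟨⟨hTS, hdS⟩, hScost⟩ := hS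
  obtain ⟨⟨hTC, hdC⟩, hCcost⟩ := hC
  have hvS : v ∈ S := hTS (by simp)
  have hvC : v ∈ C := hTC (by simp)
  have hcut1 : IsCut {s} {v} (C ∩ S) :=
    ⟨by simp [hvS, hvC], Finset.disjoint_of_subset_left Finset.inter_subset_left hdC⟩
  have hcut2 : IsCut {s} {u, v} (C ∪ S) :=
    ⟨hTS.trans Finset.subset_union_right, Finset.disjoint_union_left.mpr ⟨hdC, hdS⟩⟩
  have h1 : minCutCost w {s} {v} ≤ cutCost w (C ∩ S) := minCutCost_le w hw hcut1
  have h2 : minCutCost w {s} {u, v} ≤ cutCost w (C ∪ S) := minCutCost_le w hw hcut2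
  have hsub := cutCost_submodular w hw C S
  have heq : cutCost w (C ∩ S) = minCutCost w {s} {v} := by linarith
  have := hCmin (C ∩ S) ⟨hcut1, heq⟩ Finset.inter_subset_left
  exact Finset.inter_eq_left.mp this
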